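/- Let λ ∈ (0, 1) satisfy 1 − λ + ln(1 − λ) = 0 (numerically λ ≈ 0.4328), and define g : [0,1] → ℝ by g(y) = 1/((1−λ)(1−y)) for y ∈ [0, λ] and g(y) = 0 for y ∈ (λ, 1]. Then: (i) ∫_0^1 g(y) dy = 1; and (ii) for every z ∈ [0, 1], ∫_z^1 (1 − y) g(y) dy ≥ (λ − z)/(1 − λ). In other words, g is a β-bounded function for β = λ/(1 − λ). -/

import Mathlib

open MeasureTheory

/-- Let λ ∈ (0,1) satisfy 1 − λ + ln(1 − λ) = 0, and let
g(y) = 1/((1−λ)(1−y)) for y ∈ [0, λ] and g(y) = 0 for y ∈ (λ, 1].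
Then ∫₀¹ g = 1 and for every z ∈ [0,1], ∫_z¹ (1 − y) g(y) dy ≥ (λ − z)/(1 − λ);
i.e. g is a β-bounded function for β = λ/(1−λ). -/
theorem gsp_beta_bounded_function (lam : ℝ) (h0 : 0 < lam) (h1 : lam < 1)
    (hroot : 1 - lam + Real.log (1 - lam) = 0)
    (g : ℝ → ℝ)
    (hg₁ : ∀ y : ℝ, 0 ≤ y → y ≤ lam → g y = 1 / ((1 - lam) * (1 - y)))
    (hg₂ : ∀ y : ℝ, lam < y → y ≤ 1 → g y = 0) :
    (∫ y in (0:ℝ)..1, g y) = 1 ∧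
    ∀ z : ℝ, 0 ≤ z → z ≤ 1 →
      (lam - z) / (1 - lam) ≤ ∫ y in z..(1:ℝ), (1 - y) * g y := by
  have hlt : (0:ℝ) < 1 - lam := by linarith
  have hlog : Real.log (1 - lam) = lam - 1 := by linarith
  -- integral of g over the tail [λ,1] (and similarly for (1-y)*g y and any z ≥ λ)
  have tail_zero : ∀ (h : ℝ → ℝ) (z : ℝ), lam ≤ z → z ≤ 1 →
      (∀ y, z < y → y ≤ 1 → h y = 0) → (∫ y in z..(1:ℝ), h y) = 0 := by
    intro h z hz hz1 hh
    rw [intervalIntegral.integral_of_le hz1]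
    exact setIntegral_eq_zero_of_forall_eq_zero fun y hy => hh y hy.1 hy.2
  -- main computation on [z, λ]
  have head_int : ∀ z : ℝ, 0 ≤ z → z ≤ lam →
      IntervalIntegrable g volume z lam ∧
      (∫ y in z..lam, g y) = (1 - lam)⁻¹ * Real.log ((1 - z) / (1 - lam)) := by
    intro z hz0 hzl
    have huIcc : Set.uIcc z lam = Set.Icc z lam := Set.uIcc_of_le hzl
    have hEq : Set.EqOn g (fun y => (1 - lam)⁻¹ * (1 - y)⁻¹) (Set.uIcc z lam) := by
      intro y hy
      rw [huIcc] at hy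
      rw [hg₁ y (le_trans hz0 hy.1) hy.2, one_div, mul_inv]
    have hcont : ContinuousOn (fun y : ℝ => (1 - lam)⁻¹ * (1 - y)⁻¹) (Set.uIcc z lam) := by
      apply ContinuousOn.mul continuousOn_const
      apply ContinuousOn.inv₀ (by fun_prop)
      intro y hy
      rw [huIcc] at hy
      have := hy.2
      intro hc; nlinarith
    have hci : IntervalIntegrable (fun y : ℝ => (1 - lam)⁻¹ * (1 - y)⁻¹) volume z lam :=
      hcont.intervalIntegrable
    constructor
    · rw [intervalIntegrable_iff_integrableOn_Ioc_of_le hzl]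
      refine (integrableOn_congr_fun (fun y hy => hEq (by rw [huIcc]; exact ⟨hy.1.le, hy.2⟩))
        measurableSet_Ioc).mpr ?_
      rw [← intervalIntegrable_iff_integrableOn_Ioc_of_le hzl]
      exact hci
    · rw [intervalIntegral.integral_congr hEq, intervalIntegral.integral_const_mul]
      have : (∫ y in z..lam, (1 - y)⁻¹) = ∫ x in (1 - lam)..(1 - z), x⁻¹ :=
        intervalIntegral.integral_comp_sub_left (fun x => x⁻¹) 1
      rw [this, integral_inv_of_pos hlt (by linarith)]
  constructor
  · have h1' := head_int 0 le_rfl h0.le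
    have hsplit : (∫ y in (0:ℝ)..1, g y) = (∫ y in (0:ℝ)..lam, g y) + ∫ y in lam..(1:ℝ), g y := by
      refine (intervalIntegral.integral_add_adjacent_intervals h1'.1 ?_).symm
      rw [intervalIntegrable_iff_integrableOn_Ioc_of_le h1.le]
      exact (integrableOn_congr_fun (fun y hy => hg₂ y hy.1 hy.2) measurableSet_Ioc).mpr
        (integrableOn_zero)
    rw [hsplit, h1'.2, tail_zero g lam le_rfl h1.le (fun y hy hy1 => hg₂ y hy hy1)]
    rw [sub_zero, Real.log_div (by norm_num) (by linarith), Real.log_one, hlog]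
    field_simp
    ring
  · intro z hz0 hz1
    by_cases hzl : z ≤ lam
    · -- split at lam
      have huIcc : Set.uIcc z lam = Set.Icc z lam := Set.uIcc_of_le hzl
      have hEq : Set.EqOn (fun y => (1 - y) * g y) (fun _ => (1 - lam)⁻¹) (Set.uIcc z lam) := by
        intro y hy
        rw [huIcc] at hy
        have hy1 : y < 1 := lt_of_le_of_lt hy.2 h1
        simp only
        rw [hg₁ y (le_trans hz0 hy.1) hy.2, one_div, mul_inv]
        rw [mul_comm ((1-lam)⁻¹) ((1-y)⁻¹), ← mul_assoc, mul_inv_cancel₀ (by linarith)]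
        ring
      have hint1 : IntervalIntegrable (fun y => (1 - y) * g y) volume z lam := by
        rw [intervalIntegrable_iff_integrableOn_Ioc_of_le hzl]
        exact (integrableOn_congr_fun (fun y hy => hEq (by rw [huIcc]; exact ⟨hy.1.le, hy.2⟩))
          measurableSet_Ioc).mpr (integrableOn_const measure_Ioc_lt_top.ne)
      have hint2 : IntervalIntegrable (fun y => (1 - y) * g y) volume lam 1 := by
        rw [intervalIntegrable_iff_integrableOn_Ioc_of_le h1.le]
        exact (integrableOn_congr_fun (fun y hy => by simp [hg₂ y hy.1 hy.2])
          measurableSet_Ioc).mpr (integrableOn_zero)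
      rw [← intervalIntegral.integral_add_adjacent_intervals hint1 hint2,
        intervalIntegral.integral_congr hEq,
        tail_zero _ lam le_rfl h1.le (fun y hy hy1 => by simp [hg₂ y hy hy1])]
      simp only [intervalIntegral.integral_const, smul_eq_mul, add_zero]
      rw [div_eq_mul_inv]
    · push_neg at hzl
      rw [tail_zero _ z hzl.le hz1 (fun y hy hy1 => by simp [hg₂ y (hzl.trans hy) hy1])]
      apply div_nonpos_of_nonpos_of_nonneg <;> linarith
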